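/- Let α, β, γ ∈ ℂ satisfy 2 * |β|^2 = 1 and |α|^2 + 2 * |γ|^2 = 1, with NOT (|α|^2 = 1/2 ∧ |γ|^2 = 1/4), and let φ ∈ ℝ. Define the 3×3 complex matrices A₁ = !![0, α, 0; β, γ, 0; 0, 0, -γ] and A₂ = !![0, 0, α; 0, 0, -γ; β * exp(-2*I*φ), -γ * exp(-2*I*φ), 0], and set A 0 = A₁, A 1 = A₂. Then the family (fun p : Fin 2 × Fin 2 => (A p.1)ᴴ * (A p.2)) of 3×3 complex matrices is linearly independent over ℂ. -/

import Mathlib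

open Matrix

theorem stmt10 (α β γ : ℂ) (φ : ℝ)
    (hβ : 2 * ‖β‖ ^ 2 = 1)
    (hαγ : ‖α‖ ^ 2 + 2 * ‖γ‖ ^ 2 = 1)
    (hne : ¬ (‖α‖ ^ 2 = 1/2 ∧ ‖γ‖ ^ 2 = 1/4))
    (A : Fin 2 → Matrix (Fin 3) (Fin 3) ℂ)
    (hA0 : A 0 = !![0, α, 0; β, γ, 0; 0, 0, -γ])
    (hA1 : A 1 = !![0, 0, α; 0, 0, -γ;
      β * Complex.exp (-2 * Complex.I * φ), -γ * Complex.exp (-2 * Complex.I * φ), 0]) :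
    LinearIndependent ℂ (fun p : Fin 2 × Fin 2 => (A p.1)ᴴ * (A p.2)) := by
  set e := Complex.exp (-2 * Complex.I * φ) with he
  have hee : (starRingEnd ℂ) e * e = 1 := by
    rw [he, ← Complex.exp_conj, ← Complex.exp_add]
    rw [_root_.map_mul, _root_.map_mul, map_neg, Complex.conj_I, Complex.conj_ofReal, map_ofNat]
    ring_nf
    exact Complex.exp_zero
  have hen : e ≠ 0 := Complex.exp_ne_zero _
  have hcen : (starRingEnd ℂ) e ≠ 0 := by simpa using hen
  have hbr : ‖β‖ ^ 2 = 1/2 := by linarith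
  have hb2 : (starRingEnd ℂ) β * β = 1/2 := by
    rw [mul_comm, Complex.mul_conj, Complex.normSq_eq_norm_sq, hbr]; norm_num
  set ca : ℂ := ((‖α‖ ^ 2 : ℝ) : ℂ) with hca
  set cc : ℂ := ((‖γ‖ ^ 2 : ℝ) : ℂ) with hcc
  have ha2 : (starRingEnd ℂ) α * α = ca := by
    rw [mul_comm, Complex.mul_conj, Complex.normSq_eq_norm_sq]
  have hc2 : (starRingEnd ℂ) γ * γ = cc := by
    rw [mul_comm, Complex.mul_conj, Complex.normSq_eq_norm_sq]
  have hβn : β ≠ 0 := by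
    intro h; rw [h] at hbr; simp at hbr
  have hcβn : (starRingEnd ℂ) β ≠ 0 := by simpa using hβn
  have hsumC : ca + 2 * cc = 1 := by
    rw [hca, hcc]; exact_mod_cast hαγ
  rw [Fintype.linearIndependent_iff]
  intro g hg
  have hsum : g (0,0) • ((A 0)ᴴ * (A 0)) + g (0,1) • ((A 0)ᴴ * (A 1))
      + g (1,0) • ((A 1)ᴴ * (A 0)) + g (1,1) • ((A 1)ᴴ * (A 1)) = 0 := by
    rw [← hg, Fintype.sum_prod_type, Fin.sum_univ_two, Fin.sum_univ_two, Fin.sum_univ_two,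
      add_assoc]
  have E := fun (i j : Fin 3) => congrFun (congrFun hsum i) j
  have E00 := E 0 0
  have E01 := E 0 1
  have E11 := E 1 1
  have E02 := E 0 2
  have E12 := E 1 2
  have E21 := E 2 1
  simp only [hA0, hA1, Matrix.mul_apply, Fin.sum_univ_three, Matrix.conjTranspose_apply,
    Matrix.add_apply, Matrix.smul_apply, Matrix.zero_apply, Matrix.cons_val', Matrix.cons_val_zero,
    Matrix.cons_val_one, Matrix.head_cons, Matrix.head_fin_const, Matrix.empty_val',
    Matrix.cons_val_fin_one, Matrix.cons_val_two, Matrix.tail_cons, Matrix.of_apply,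
    Complex.star_def, star_zero, star_neg, star_mul', map_zero,
    smul_eq_mul, map_neg, _root_.map_mul, mul_zero, zero_mul, add_zero, zero_add,
    mul_neg, neg_mul, neg_neg, neg_zero] at E00 E01 E11 E02 E12 E21
  have eq1 : g (0,0) + g (1,1) = 0 := by
    linear_combination 2 * E00 - (2 * g (0,0)) * hb2
      - (2 * g (1,1) * ((starRingEnd ℂ) β * β)) * hee - (2 * g (1,1)) * hb2
  have eq2 : (g (0,0) - g (1,1)) * ((starRingEnd ℂ) β * γ) = 0 := by
    linear_combination E01 + (g (1,1) * ((starRingEnd ℂ) β * γ)) * hee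
  have eq3 : g (0,0) * (ca + cc) + g (1,1) * cc = 0 := by
    linear_combination E11 - g (0,0) * ha2 - g (0,0) * hc2
      - (g (1,1) * ((starRingEnd ℂ) γ * γ)) * hee - g (1,1) * hc2
  have eq4 : (g (0,1) + g (1,0) * (starRingEnd ℂ) e) * ((starRingEnd ℂ) β * γ) = 0 := by
    linear_combination -E02
  have eq5 : g (0,1) * (ca - cc) + g (1,0) * cc * (starRingEnd ℂ) e = 0 := by
    linear_combination E12 - g (0,1) * ha2 + g (0,1) * hc2 - (g (1,0) * (starRingEnd ℂ) e) * hc2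
  have eq6 : g (0,1) * cc * e + g (1,0) * (ca - cc) = 0 := by
    linear_combination E21 - (g (0,1) * e) * hc2 - g (1,0) * ha2 + g (1,0) * hc2
  have hall : g (0,0) = 0 ∧ g (0,1) = 0 ∧ g (1,0) = 0 ∧ g (1,1) = 0 := by
    by_cases hα0 : α = 0
    · have hγr : ‖γ‖ ^ 2 = 1/2 := by
        rw [hα0] at hαγ; simp at hαγ; linarith
      have hγn : γ ≠ 0 := by intro h; rw [h] at hγr; simp at hγr
      have hccv : cc = 1/2 := by rw [hcc, hγr]; norm_num
      have hcav : ca = 0 := by rw [hca, hα0]; simp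
      have h1 : g (0,0) - g (1,1) = 0 := by
        rcases mul_eq_zero.1 eq2 with h | h
        · exact h
        · exact absurd h (mul_ne_zero hcβn hγn)
      have h00 : g (0,0) = 0 := by linear_combination (eq1 + h1) / 2
      have h11 : g (1,1) = 0 := by linear_combination (eq1 - h1) / 2
      have h3 : g (0,1) + g (1,0) * (starRingEnd ℂ) e = 0 := by
        rcases mul_eq_zero.1 eq4 with h | h
        · exact h
        · exact absurd h (mul_ne_zero hcβn hγn)
      have h2 : g (0,1) - g (1,0) * (starRingEnd ℂ) e = 0 := by
        linear_combination -2 * eq5 + 2 * g (0,1) * hcav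
          + (2 * g (1,0) * (starRingEnd ℂ) e - 2 * g (0,1)) * hccv
      have h01 : g (0,1) = 0 := by linear_combination (h3 + h2) / 2
      have h10' : g (1,0) * (starRingEnd ℂ) e = 0 := by linear_combination (h3 - h2) / 2
      have h10 : g (1,0) = 0 := by
        rcases mul_eq_zero.1 h10' with h | h
        · exact h
        · exact absurd h hcen
      exact ⟨h00, h01, h10, h11⟩
    · have har : ‖α‖ ^ 2 ≠ 0 := by
        intro h; exact hα0 (by simpa using pow_eq_zero_iff (n := 2) (by norm_num) |>.1 h)
      have hcan : ca ≠ 0 := by rw [hca]; exact_mod_cast har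
      have h00' : g (0,0) * ca = 0 := by linear_combination eq3 - cc * eq1
      have h00 : g (0,0) = 0 := by
        rcases mul_eq_zero.1 h00' with h | h
        · exact h
        · exact absurd h hcan
      have h11 : g (1,1) = 0 := by linear_combination eq1 - h00
      have h2c : ‖α‖ ^ 2 ≠ 2 * ‖γ‖ ^ 2 := by
        intro h; exact hne ⟨by linarith, by linarith⟩
      have hdr : (‖α‖ ^ 2 - ‖γ‖ ^ 2) ^ 2 - (‖γ‖ ^ 2) ^ 2 ≠ 0 := by
        intro h
        have h' : ‖α‖ ^ 2 * (‖α‖ ^ 2 - 2 * ‖γ‖ ^ 2) = 0 := by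
          linear_combination h
        rcases mul_eq_zero.1 h' with h'' | h''
        · exact har h''
        · exact h2c (by linarith)
      have hd : ((ca - cc) ^ 2 - cc ^ 2 : ℂ) ≠ 0 := by
        rw [hca, hcc]; intro h; exact hdr (by exact_mod_cast h)
      have h01' : g (0,1) * ((ca - cc) ^ 2 - cc ^ 2) = 0 := by
        linear_combination (ca - cc) * eq5 - (cc * (starRingEnd ℂ) e) * eq6
          + (g (0,1) * cc ^ 2) * hee
      have h01 : g (0,1) = 0 := by
        rcases mul_eq_zero.1 h01' with h | h
        · exact h
        · exact absurd h hd
      have h10' : g (1,0) * ((ca - cc) ^ 2 - cc ^ 2) = 0 := by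
        linear_combination (ca - cc) * eq6 - (cc * e) * eq5 + (g (1,0) * cc ^ 2) * hee
      have h10 : g (1,0) = 0 := by
        rcases mul_eq_zero.1 h10' with h | h
        · exact h
        · exact absurd h hd
      exact ⟨h00, h01, h10, h11⟩
  intro i
  fin_cases i
  · exact hall.1
  · exact hall.2.1
  · exact hall.2.2.1
  · exact hall.2.2.2
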